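/- Assuming R([4,2],[8,1]) ≤ 42 and R([3,2],[k,1]) = 2k−1 for all k ≥ 2, we have R([4,2],[k,1]) ≤ k² − 22 for all integers k ≥ 8. -/

import Mathlib

open Finset

/-- A monochromatic copy of `K_{[k,t]}` (complete graph on `k` vertices minus the
edges of a clique of order `t`) in color `i`, inside an `r`-edge-coloring `C` of `K_N`. -/
def HasMonoDropped {N r : ℕ} (C : Fin N → Fin N → Fin r) (i : Fin r) (k t : ℕ) : Prop :=
  ∃ S T : Finset (Fin N), T ⊆ S ∧ S.card = k ∧ T.card = t ∧
    ∀ u ∈ S, ∀ v ∈ S, u ≠ v → ¬(u ∈ T ∧ v ∈ T) → C u v = i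

/-- `R([k 0, t 0], …, [k (r-1), t (r-1)])`: the smallest `n` such that every
`r`-edge-coloring of `K_n` contains a monochromatic `K_{[k i, t i]}` in color `i`
for some `i`. -/
noncomputable def RamseyDropped (r : ℕ) (k t : Fin r → ℕ) : ℕ :=
  sInf {n | ∀ C : Fin n → Fin n → Fin r, (∀ u v, C u v = C v u) →
    ∃ i : Fin r, HasMonoDropped C i (k i) (t i)}

/-- The coloring `C` of `K_N` contains a `k`-clique whose induced coloring is a
`χ_r`-coloring: there are a labeling `e` of `k` vertices and `φ` such that the edge
`{e i, e j}` with `i < j` has color `φ i`. -/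
def HasChiClique {N r : ℕ} (k : ℕ) (C : Fin N → Fin N → Fin r) : Prop :=
  ∃ e : Fin k → Fin N, Function.Injective e ∧
    ∃ φ : Fin k → Fin r, ∀ i j : Fin k, i < j → C (e i) (e j) = φ i

/-- `n` is large enough for `χ_r(k)`: every `r`-edge-coloring of `K_N`, `N ≥ n`,
contains a `k`-clique whose induced coloring is a `χ_r`-coloring. -/
def ChiProp (r k n : ℕ) : Prop :=
  ∀ N, n ≤ N → ∀ C : Fin N → Fin N → Fin r, (∀ u v, C u v = C v u) → HasChiClique k C

/-- `χ_r(k)`, the smallest `n` satisfying `ChiProp r k n`. -/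
noncomputable def chiNum (r k : ℕ) : ℕ := sInf {n | ChiProp r k n}

def Good (a b n : ℕ) : Prop :=
  ∀ C : Fin n → Fin n → Fin 2, (∀ u v, C u v = C v u) →
    ∃ i : Fin 2, HasMonoDropped C i (![a, b] i) (![2, 1] i)

lemma ramsey_eq (a b : ℕ) : RamseyDropped 2 ![a, b] ![2, 1] = sInf {n | Good a b n} := rfl

lemma good_subset {N : ℕ} (A : Finset (Fin N)) (a b n : ℕ) (hA : n ≤ A.card)
    (hgood : Good a b n) (C : Fin N → Fin N → Fin 2) (hsym : ∀ u v, C u v = C v u) :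
    (∃ S T : Finset (Fin N), S ⊆ A ∧ T ⊆ S ∧ S.card = a ∧ T.card = 2 ∧
      ∀ u ∈ S, ∀ v ∈ S, u ≠ v → ¬(u ∈ T ∧ v ∈ T) → C u v = 0) ∨
    (∃ S T : Finset (Fin N), S ⊆ A ∧ T ⊆ S ∧ S.card = b ∧ T.card = 1 ∧
      ∀ u ∈ S, ∀ v ∈ S, u ≠ v → ¬(u ∈ T ∧ v ∈ T) → C u v = 1) := by
  obtain ⟨A', hA'A, hA'card⟩ := Finset.exists_subset_card_eq hA
  let e := A'.orderIsoOfFin hA'card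
  set f : Fin n → Fin N := fun i => (e i : Fin N) with hf_def
  have hf : Function.Injective f := by
    intro i j h
    exact e.injective (Subtype.ext h)
  have hfA : ∀ i, f i ∈ A := fun i => hA'A (e i).2
  obtain ⟨i, S, T, hTS, hS, hT, hmono⟩ :=
    hgood (fun x y => C (f x) (f y)) (fun u v => hsym _ _)
  have hmem : ∀ (U : Finset (Fin n)) x, x ∈ U → f x ∈ U.image f :=
    fun U x hx => Finset.mem_image_of_mem f hx
  have hcardim : ∀ (U : Finset (Fin n)), (U.image f).card = U.card :=
    fun U => Finset.card_image_of_injective _ hf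
  have hSA : S.image f ⊆ A := by
    intro x hx
    obtain ⟨y, _, rfl⟩ := Finset.mem_image.mp hx
    exact hfA y
  have hpush : ∀ u ∈ S.image f, ∀ v ∈ S.image f, u ≠ v → ¬(u ∈ T.image f ∧ v ∈ T.image f) →
      C u v = i := by
    intro u hu v hv huv hUT
    obtain ⟨x, hx, rfl⟩ := Finset.mem_image.mp hu
    obtain ⟨y, hy, rfl⟩ := Finset.mem_image.mp hv
    exact hmono x hx y hy (fun h => huv (by rw [h]))
      (fun h => hUT ⟨hmem _ _ h.1, hmem _ _ h.2⟩)
  have hi : i = 0 ∨ i = 1 := by omega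
  rcases hi with rfl | rfl
  · left
    simp only [Matrix.cons_val_zero] at hS hT
    exact ⟨S.image f, T.image f, hSA, Finset.image_subset_image hTS,
      by rw [hcardim, hS], by rw [hcardim, hT], hpush⟩
  · right
    simp only [Matrix.cons_val_one, Matrix.head_cons, Matrix.cons_val_zero] at hS hT
    exact ⟨S.image f, T.image f, hSA, Finset.image_subset_image hTS,
      by rw [hcardim, hS], by rw [hcardim, hT], hpush⟩

lemma good_mono {a b n m : ℕ} (h : Good a b n) (hnm : n ≤ m) : Good a b m := by
  intro C hsym
  have hcard : n ≤ (univ : Finset (Fin m)).card := by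
    simpa using hnm
  rcases good_subset univ a b n hcard h C hsym with
    ⟨S, T, _, hTS, hS, hT, hmono⟩ | ⟨S, T, _, hTS, hS, hT, hmono⟩
  · exact ⟨0, S, T, hTS, by simpa using hS, by simpa using hT, hmono⟩
  · exact ⟨1, S, T, hTS, by simpa using hS, by simpa using hT, hmono⟩

lemma good_two (b n : ℕ) (hn : 2 ≤ n) : Good 2 b n := by
  intro C hsym
  have h01 : (⟨0, by omega⟩ : Fin n) ≠ ⟨1, by omega⟩ := by
    simp [Fin.ext_iff]
  refine ⟨0, {⟨0, by omega⟩, ⟨1, by omega⟩}, {⟨0, by omega⟩, ⟨1, by omega⟩},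
    le_rfl, ?_, ?_, ?_⟩
  · simpa using Finset.card_pair h01
  · simpa using Finset.card_pair h01
  · intro u hu v hv huv hUT
    exact absurd ⟨hu, hv⟩ hUT
  
lemma good_one (a n : ℕ) (hn : 1 ≤ n) : Good a 1 n := by
  intro C hsym
  refine ⟨1, {⟨0, by omega⟩}, {⟨0, by omega⟩}, le_rfl, by simp, by simp, ?_⟩
  intro u hu v hv huv hUT
  simp only [Finset.mem_singleton] at hu hv
  exact absurd (hu.trans hv.symm) huv

lemma good_step {a b n₁ n₂ : ℕ} (hpos : 0 < n₁ + n₂)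
    (h₁ : Good a (b + 1) n₁) (h₂ : Good (a + 1) b n₂) :
    Good (a + 1) (b + 1) (n₁ + n₂) := by
  intro C hsym
  set v : Fin (n₁ + n₂) := ⟨n₁ + n₂ - 1, by omega⟩ with hv_def
  set A := univ.filter (fun u : Fin (n₁ + n₂) => u ≠ v ∧ C u v = 0) with hA_def
  set B := univ.filter (fun u : Fin (n₁ + n₂) => u ≠ v ∧ C u v = 1) with hB_def
  have hdisj : Disjoint A B := by
    rw [Finset.disjoint_left]
    intro u hu hu'
    simp only [hA_def, hB_def, Finset.mem_filter] at hu hu'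
    have := hu.2.2.symm.trans hu'.2.2
    omega
  have hunion : A ∪ B = univ.erase v := by
    ext u
    simp only [hA_def, hB_def, Finset.mem_union, Finset.mem_filter, Finset.mem_univ,
      true_and, Finset.mem_erase]
    have hC : C u v = 0 ∨ C u v = 1 := by omega
    tauto
  have hcount : A.card + B.card = n₁ + n₂ - 1 := by
    rw [← Finset.card_union_of_disjoint hdisj, hunion,
      Finset.card_erase_of_mem (Finset.mem_univ v)]
    simp
  have hvA : v ∉ A := by simp [hA_def]
  have hvB : v ∉ B := by simp [hB_def]
  have hcase : n₁ ≤ A.card ∨ n₂ ≤ B.card := by omega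
  rcases hcase with hle | hle
  · rcases good_subset A a (b + 1) n₁ hle h₁ C hsym with
      ⟨S, T, hSA, hTS, hS, hT, hmono⟩ | ⟨S, T, _, hTS, hS, hT, hmono⟩
    · -- color 0 copy of K_{[a,2]}, add v to get K_{[a+1,2]}
      have hvS : v ∉ S := fun h => hvA (hSA h)
      have hA0 : ∀ u ∈ S, C u v = 0 := by
        intro u hu
        exact ((Finset.mem_filter.mp (hSA hu)).2).2
      refine ⟨0, insert v S, T, hTS.trans (Finset.subset_insert _ _), ?_, ?_, ?_⟩
      · rw [Finset.card_insert_of_notMem hvS, hS]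
        simp
      · simpa using hT
      · intro x hx y hy hxy hxyT
        rcases Finset.mem_insert.mp hx with rfl | hxS
        · rcases Finset.mem_insert.mp hy with rfl | hyS
          · exact absurd rfl hxy
          · rw [hsym]
            exact hA0 y hyS
        · rcases Finset.mem_insert.mp hy with rfl | hyS
          · exact hA0 x hxS
          · exact hmono x hxS y hyS hxy hxyT
    · -- color 1 copy of K_{b+1}, done
      exact ⟨1, S, T, hTS, by simpa using hS, by simpa using hT, hmono⟩
  · rcases good_subset B (a + 1) b n₂ hle h₂ C hsym with
      ⟨S, T, _, hTS, hS, hT, hmono⟩ | ⟨S, T, hSB, hTS, hS, hT, hmono⟩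
    · -- color 0 copy of K_{[a+1,2]}, done
      exact ⟨0, S, T, hTS, by simpa using hS, by simpa using hT, hmono⟩
    · -- color 1 copy of K_b, add v
      have hvS : v ∉ S := fun h => hvB (hSB h)
      have hB1 : ∀ u ∈ S, C u v = 1 := by
        intro u hu
        exact ((Finset.mem_filter.mp (hSB hu)).2).2
      refine ⟨1, insert v S, T, hTS.trans (Finset.subset_insert _ _), ?_, ?_, ?_⟩
      · rw [Finset.card_insert_of_notMem hvS, hS]
        simp
      · simpa using hT
      · intro x hx y hy hxy hxyT
        rcases Finset.mem_insert.mp hx with rfl | hxS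
        · rcases Finset.mem_insert.mp hy with rfl | hyS
          · exact absurd rfl hxy
          · rw [hsym]
            exact hB1 y hyS
        · rcases Finset.mem_insert.mp hy with rfl | hyS
          · exact hB1 x hxS
          · exact hmono x hxS y hyS hxy hxyT

lemma good_exists : ∀ a b : ℕ, ∃ n, 0 < n ∧ Good (a + 2) (b + 1) n := by
  intro a
  induction a with
  | zero => exact fun b => ⟨2, by norm_num, good_two _ _ le_rfl⟩
  | succ a ih =>
    intro b
    induction b with
    | zero => exact ⟨1, one_pos, good_one _ _ le_rfl⟩
    | succ b ihb =>
      obtain ⟨n₁, hn₁, h₁⟩ := ih (b + 1)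
      obtain ⟨n₂, hn₂, h₂⟩ := ihb
      exact ⟨n₁ + n₂, by omega, good_step (by omega) h₁ h₂⟩

/-- Theorem 3 (b): assuming R([4,2],[8,1]) ≤ 42 and R([3,2],[k,1]) = 2k−1 for k ≥ 2,
we have R([4,2],[k,1]) ≤ k² − 22 for all k ≥ 8. -/
theorem stmt8
    (h8 : RamseyDropped 2 ![4, 8] ![2, 1] ≤ 42)
    (h3 : ∀ k : ℕ, 2 ≤ k → RamseyDropped 2 ![3, k] ![2, 1] = 2 * k - 1) :
    ∀ k : ℕ, 8 ≤ k → RamseyDropped 2 ![4, k] ![2, 1] ≤ k ^ 2 - 22 := by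
  have key : ∀ k : ℕ, 8 ≤ k → Good 4 k (k ^ 2 - 22) := by
    intro k hk
    induction k with
    | zero => omega
    | succ k ih =>
      rcases Nat.lt_or_ge k 8 with hlt | hge
      · -- base case k + 1 = 8
        have hk8 : k = 7 := by omega
        subst hk8
        have hne : {n | Good 4 8 n}.Nonempty := by
          obtain ⟨n, _, hn⟩ := good_exists 2 7
          exact ⟨n, hn⟩
        have hmem : Good 4 8 (sInf {n | Good 4 8 n}) := Nat.sInf_mem hne
        have hle : sInf {n | Good 4 8 n} ≤ 42 := by
          rw [← ramsey_eq]; exact h8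
        have : Good 4 8 42 := good_mono hmem hle
        simpa using this
      · -- inductive step
        have ih' := ih hge
        have hne : {n | Good 3 (k + 1) n}.Nonempty := by
          obtain ⟨n, _, hn⟩ := good_exists 1 k
          exact ⟨n, hn⟩
        have hmem : Good 3 (k + 1) (sInf {n | Good 3 (k + 1) n}) := Nat.sInf_mem hne
        have heq : sInf {n | Good 3 (k + 1) n} = 2 * (k + 1) - 1 := by
          rw [← ramsey_eq]; exact h3 (k + 1) (by omega)
        rw [heq] at hmem
        have hstep := good_step (n₁ := 2 * (k + 1) - 1) (n₂ := k ^ 2 - 22)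
          (by omega) hmem ih'
        have e1 : (k + 1) ^ 2 = k ^ 2 + 2 * k + 1 := by ring
        have e2 : 22 ≤ k ^ 2 := by nlinarith
        have e3 : 2 * (k + 1) - 1 + (k ^ 2 - 22) = (k + 1) ^ 2 - 22 := by omega
        rwa [e3] at hstep
  intro k hk
  rw [ramsey_eq]
  exact Nat.sInf_le (key k hk)
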